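/- Let 0 < λ < 1 < μ. The Jacobian matrix of Φ_{λ,μ} at the fixed point p* has trace equal to a(λ,μ) and determinant equal to b(λ,μ), so its eigenvalues are the roots of σ² − aσ + b = 0. In particular, if a² < 4b, then the eigenvalues are the non-real complex conjugates σ = (a + i√(4b − a²))/2 and σ̄ = (a − i√(4b − a²))/2, and their squared modulus satisfies |σ|² = |σ̄|² = b. -/

import Mathlib

noncomputable section

/-- The planar R-S flip-flop model map `Φ_{λ,μ}(x,y) = (1 − x(λ(1−x) + y), μy(x − y))`. -/
def Phi (l m : ℝ) (p : ℝ × ℝ) : ℝ × ℝ :=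
  (1 - p.1 * (l * (1 - p.1) + p.2), m * p.2 * (p.1 - p.2))

/-- The continuous linear map ℝ² → ℝ² with matrix `[[a, b], [c, d]]`. -/
def Dmap (a b c d : ℝ) : ℝ × ℝ →L[ℝ] ℝ × ℝ :=
  (a • ContinuousLinearMap.fst ℝ ℝ ℝ + b • ContinuousLinearMap.snd ℝ ℝ ℝ).prod
    (c • ContinuousLinearMap.fst ℝ ℝ ℝ + d • ContinuousLinearMap.snd ℝ ℝ ℝ)

/-- `x*` coordinate of the interior fixed point. -/
def xstar (l m : ℝ) : ℝ :=
  ((m⁻¹ - l - 1) + Real.sqrt ((1 + l - m⁻¹) ^ 2 + 4 * (1 - l))) / (2 * (1 - l))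

/-- `y*` coordinate of the interior fixed point. -/
def ystar (l m : ℝ) : ℝ := xstar l m - 1 / m

/-- `a(λ,μ)`, the trace of the Jacobian of Φ at p*. -/
def adef (l m : ℝ) : ℝ := (2 * l - m - 1) * xstar l m + (2 - l + m⁻¹)

/-- `b(λ,μ)`, the determinant of the Jacobian of Φ at p*. -/
def bdef (l m : ℝ) : ℝ :=
  m * ((l * (4 * m⁻¹ - 1) - 2 * (1 + m⁻¹)) * xstar l m + 2 * (1 - m⁻¹ * (l - m⁻¹)))

/-- The Jacobian matrix of Φ_{λ,μ} at the interior fixed point p*. -/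
def Jp (l m : ℝ) : Matrix (Fin 2) (Fin 2) ℝ :=
  !![l * (2 * xstar l m - 1) - ystar l m, -(xstar l m);
     m * ystar l m, m * (xstar l m - 2 * ystar l m)]

lemma quad (l m : ℝ) (hl1 : l < 1) :
    (1 - l) * (xstar l m) ^ 2 + (1 + l - m⁻¹) * xstar l m - 1 = 0 := by
  have hd : (1 : ℝ) - l ≠ 0 := by linarith
  have hs : Real.sqrt ((1 + l - m⁻¹) ^ 2 + 4 * (1 - l)) ^ 2
      = (1 + l - m⁻¹) ^ 2 + 4 * (1 - l) :=
    Real.sq_sqrt (by nlinarith [sq_nonneg (1 + l - m⁻¹)])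
  rw [xstar]
  set s := Real.sqrt ((1 + l - m⁻¹) ^ 2 + 4 * (1 - l)) with hsdef
  field_simp
  linear_combination hs

lemma trace_eq (l m : ℝ) (hl1 : l < 1) (hm : 1 < m) :
    Matrix.trace (Jp l m) = adef l m := by
  have hmi : m * m⁻¹ = 1 := mul_inv_cancel₀ (by linarith : m ≠ 0)
  simp [Jp, adef, ystar, Matrix.trace_fin_two_of]
  linear_combination 2 * hmi

lemma det_eq (l m : ℝ) (hl1 : l < 1) (hm : 1 < m) :
    Matrix.det (Jp l m) = bdef l m := by
  have hm0 : m ≠ 0 := by linarith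
  have hmi : m * m⁻¹ = 1 := mul_inv_cancel₀ hm0
  have hq := quad l m hl1
  simp [Jp, bdef, ystar, Matrix.det_fin_two_of]
  linear_combination (2 * m) * hq

/-- For 0 < λ < 1 < μ: the Jacobian of Φ at p* has trace a(λ,μ) and determinant
b(λ,μ), so its eigenvalues are the roots of σ² − aσ + b = 0; if a² < 4b they are the
non-real conjugates σ = (a ± i√(4b − a²))/2 with |σ|² = b. -/
theorem stmt_13 (l m : ℝ) (hl0 : 0 < l) (hl1 : l < 1) (hm : 1 < m) :
    HasFDerivAt (Phi l m)
      (Dmap (l * (2 * xstar l m - 1) - ystar l m) (-(xstar l m)) (m * ystar l m)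
        (m * (xstar l m - 2 * ystar l m))) (xstar l m, ystar l m) ∧
    Matrix.trace (Jp l m) = adef l m ∧
    Matrix.det (Jp l m) = bdef l m ∧
    ((adef l m) ^ 2 < 4 * bdef l m →
      (((adef l m : ℂ) + Complex.I * Real.sqrt (4 * bdef l m - (adef l m) ^ 2)) / 2).im
          ≠ 0 ∧
      (starRingEnd ℂ)
          (((adef l m : ℂ) + Complex.I * Real.sqrt (4 * bdef l m - (adef l m) ^ 2)) / 2)
        = ((adef l m : ℂ) - Complex.I * Real.sqrt (4 * bdef l m - (adef l m) ^ 2)) / 2 ∧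
      (∀ σ : ℂ,
        (σ = ((adef l m : ℂ) + Complex.I * Real.sqrt (4 * bdef l m - (adef l m) ^ 2)) / 2
          ∨ σ = ((adef l m : ℂ) - Complex.I * Real.sqrt (4 * bdef l m - (adef l m) ^ 2)) / 2)
        → σ ^ 2 - (adef l m : ℂ) * σ + (bdef l m : ℂ) = 0 ∧
          Complex.normSq σ = bdef l m ∧
          Matrix.det (σ • (1 : Matrix (Fin 2) (Fin 2) ℂ)
              - (Jp l m).map (Complex.ofReal)) = 0)) := by
  set x := xstar l m with hxdef
  set y := ystar l m with hydef
  refine ⟨?_, trace_eq l m hl1 hm, det_eq l m hl1 hm, ?_⟩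
  · -- derivative
    have hx : HasFDerivAt (fun p : ℝ × ℝ => p.1) (ContinuousLinearMap.fst ℝ ℝ ℝ) (x, y) :=
      hasFDerivAt_fst
    have hy : HasFDerivAt (fun p : ℝ × ℝ => p.2) (ContinuousLinearMap.snd ℝ ℝ ℝ) (x, y) :=
      hasFDerivAt_snd
    have h1 := ((hasFDerivAt_const (1:ℝ) ((x,y):ℝ×ℝ)).sub
      (hx.mul ((((hasFDerivAt_const l ((x,y):ℝ×ℝ)).mul
        ((hasFDerivAt_const (1:ℝ) ((x,y):ℝ×ℝ)).sub hx))).add hy)))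
    have h2 := (((hasFDerivAt_const m ((x,y):ℝ×ℝ)).mul hy).mul (hx.sub hy))
    have H := HasFDerivAt.prodMk h1 h2
    refine HasFDerivAt.congr_fderiv H ?_
    apply ContinuousLinearMap.ext
    intro v
    simp [Dmap, ContinuousLinearMap.prod_apply]
    constructor <;> ring
  · intro hab
    set A := adef l m with hAdef
    set B := bdef l m with hBdef
    have hpos : 0 < 4 * B - A ^ 2 := by linarith
    set r := Real.sqrt (4 * B - A ^ 2) with hrdef
    have hr0 : 0 < r := Real.sqrt_pos.mpr hpos
    have hr2 : r ^ 2 = 4 * B - A ^ 2 := Real.sq_sqrt hpos.le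
    have hr2C : (r : ℂ) ^ 2 = 4 * (B : ℂ) - (A : ℂ) ^ 2 := by exact_mod_cast congrArg Complex.ofReal hr2
    refine ⟨?_, ?_, ?_⟩
    · simp [Complex.div_im, Complex.add_im, Complex.mul_im]
      intro h
      exact absurd h (by positivity)
    · simp [map_div₀, Complex.conj_I, Complex.conj_ofNat]
      ring
    · intro σ hσ
      have hroot : σ ^ 2 - (A : ℂ) * σ + (B : ℂ) = 0 := by
        rcases hσ with h | h <;> rw [h] <;>
          linear_combination ((r:ℂ)^2/4) * Complex.I_sq - (1/4 : ℂ) * hr2C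
      refine ⟨hroot, ?_, ?_⟩
      · have hns : ((Complex.normSq σ : ℝ) : ℂ) = (B : ℂ) := by
          rw [← Complex.mul_conj]
          rcases hσ with h | h <;> rw [h] <;>
            simp [map_div₀, Complex.conj_I, Complex.conj_ofNat] <;>
            linear_combination (-(r:ℂ)^2/4) * Complex.I_sq + (1/4 : ℂ) * hr2C
        exact_mod_cast hns
      · have ht : Jp l m 0 0 + Jp l m 1 1 = A := by
          have := trace_eq l m hl1 hm
          rwa [Matrix.trace_fin_two] at this
        have hd : Jp l m 0 0 * Jp l m 1 1 - Jp l m 0 1 * Jp l m 1 0 = B := by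
          have := det_eq l m hl1 hm
          rwa [Matrix.det_fin_two] at this
        have htC : ((Jp l m 0 0 : ℝ) : ℂ) + ((Jp l m 1 1 : ℝ) : ℂ) = (A : ℂ) := by
          exact_mod_cast congrArg Complex.ofReal ht
        have hdC : ((Jp l m 0 0 : ℝ) : ℂ) * ((Jp l m 1 1 : ℝ) : ℂ)
            - ((Jp l m 0 1 : ℝ) : ℂ) * ((Jp l m 1 0 : ℝ) : ℂ) = (B : ℂ) := by
          exact_mod_cast congrArg Complex.ofReal hd
        rw [Matrix.det_fin_two]
        simp only [Matrix.sub_apply, Matrix.smul_apply, Matrix.one_apply, Matrix.map_apply]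
        simp only [Fin.isValue, if_true, if_neg (by decide : (0:Fin 2) ≠ 1),
          if_neg (by decide : (1:Fin 2) ≠ 0), ite_true, smul_eq_mul, mul_one, mul_zero]
        linear_combination hroot - σ * htC + hdC
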